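/- arXiv:2203.00373 — 8 statements merged into one kernel-verified Lean document; each statement's English description precedes it below -/
import Mathlib

section
/- For every natural number k, the matrix identities R_G̃ · R_D̃^k · R_G = R_G · R_D^k · R_G̃ and R_D̃ · R_G̃^k · R_D = R_D · R_G^k · R_D̃ hold, where R_G̃, R_G, R_D̃, R_D are the 3×3 integer matrices [[1,1,0],[0,1,0],[0,1,1]], [[1,1,0],[0,1,0],[0,0,1]], [[1,0,0],[1,1,0],[0,0,1]], [[1,0,0],[1,1,0],[1,0,1]] respectively. -/
open Matrix

lemma pow_Dt (k : ℕ) : (!![1,0,0;1,1,0;0,0,1] : Matrix (Fin 3) (Fin 3) ℤ) ^ k = !![1,0,0;(k:ℤ),1,0;0,0,1] := by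
  induction k with
  | zero => simp [Matrix.one_fin_three]
  | succ n ih => rw [pow_succ, ih]; norm_num [Matrix.mul_fin_three]

lemma pow_G (k : ℕ) : (!![1,1,0;0,1,0;0,0,1] : Matrix (Fin 3) (Fin 3) ℤ) ^ k = !![1,(k:ℤ),0;0,1,0;0,0,1] := by
  induction k with
  | zero => simp [Matrix.one_fin_three]
  | succ n ih => rw [pow_succ, ih]; norm_num [Matrix.mul_fin_three]; ring_nf

lemma pow_D (k : ℕ) : (!![1,0,0;1,1,0;1,0,1] : Matrix (Fin 3) (Fin 3) ℤ) ^ k = !![1,0,0;(k:ℤ),1,0;(k:ℤ),0,1] := by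
  induction k with
  | zero => simp [Matrix.one_fin_three]
  | succ n ih => rw [pow_succ, ih]; norm_num [Matrix.mul_fin_three]

lemma pow_Gt (k : ℕ) : (!![1,1,0;0,1,0;0,1,1] : Matrix (Fin 3) (Fin 3) ℤ) ^ k = !![1,(k:ℤ),0;0,1,0;0,(k:ℤ),1] := by
  induction k with
  | zero => simp [Matrix.one_fin_three]
  | succ n ih => rw [pow_succ, ih]; norm_num [Matrix.mul_fin_three]; ring_nf

theorem stmt_0 (k : ℕ) :
    (!![1,1,0;0,1,0;0,1,1] : Matrix (Fin 3) (Fin 3) ℤ) * (!![1,0,0;1,1,0;0,0,1] : Matrix (Fin 3) (Fin 3) ℤ) ^ k * !![1,1,0;0,1,0;0,0,1]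
      = (!![1,1,0;0,1,0;0,0,1] : Matrix (Fin 3) (Fin 3) ℤ) * (!![1,0,0;1,1,0;1,0,1] : Matrix (Fin 3) (Fin 3) ℤ) ^ k * !![1,1,0;0,1,0;0,1,1] ∧
    (!![1,0,0;1,1,0;0,0,1] : Matrix (Fin 3) (Fin 3) ℤ) * (!![1,1,0;0,1,0;0,1,1] : Matrix (Fin 3) (Fin 3) ℤ) ^ k * !![1,0,0;1,1,0;1,0,1]
      = (!![1,0,0;1,1,0;1,0,1] : Matrix (Fin 3) (Fin 3) ℤ) * (!![1,1,0;0,1,0;0,0,1] : Matrix (Fin 3) (Fin 3) ℤ) ^ k * !![1,0,0;1,1,0;0,0,1] := by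
  rw [pow_Dt, pow_G, pow_D, pow_Gt]
  constructor <;> norm_num [Matrix.mul_fin_three] <;> ring
end

section
/- The convex cone C₂ = {(x,y,z) ∈ ℝ³ : 0 ≤ x, y ≤ 0, y ≤ z ≤ x} is invariant under multiplication by the inverse of each of the matrices R_G, R_G̃, R_D, R_D̃. -/
open Matrix

theorem stmt_3
    (C₂ : Set (Fin 3 → ℝ))
    (hC₂ : C₂ = {v | 0 ≤ v 0 ∧ v 1 ≤ 0 ∧ v 1 ≤ v 2 ∧ v 2 ≤ v 0}) :
    ∀ R ∈ ({!![1,1,0;0,1,0;0,0,1], !![1,1,0;0,1,0;0,1,1],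
             !![1,0,0;1,1,0;1,0,1], !![1,0,0;1,1,0;0,0,1]} : Set (Matrix (Fin 3) (Fin 3) ℝ)),
      ∀ v ∈ C₂, R⁻¹.mulVec v ∈ C₂ := by
  subst hC₂
  intro R hR v hv
  obtain ⟨h0, h1, h2, h3⟩ := hv
  simp only [Set.mem_insert_iff, Set.mem_singleton_iff] at hR
  rcases hR with rfl | rfl | rfl | rfl
  · have hinv : (!![1,1,0;0,1,0;0,0,1] : Matrix (Fin 3) (Fin 3) ℝ)⁻¹
        = !![1,-1,0;0,1,0;0,0,1] := by
      apply Matrix.inv_eq_right_inv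
      rw [Matrix.one_fin_three]; norm_num [Matrix.mul_fin_three]
    rw [hinv]
    refine ⟨?_, ?_, ?_, ?_⟩ <;>
      simp [Matrix.mulVec, dotProduct, Fin.sum_univ_three] <;> linarith
  · have hinv : (!![1,1,0;0,1,0;0,1,1] : Matrix (Fin 3) (Fin 3) ℝ)⁻¹
        = !![1,-1,0;0,1,0;0,-1,1] := by
      apply Matrix.inv_eq_right_inv
      rw [Matrix.one_fin_three]; norm_num [Matrix.mul_fin_three]
    rw [hinv]
    refine ⟨?_, ?_, ?_, ?_⟩ <;>
      simp [Matrix.mulVec, dotProduct, Fin.sum_univ_three] <;> linarith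
  · have hinv : (!![1,0,0;1,1,0;1,0,1] : Matrix (Fin 3) (Fin 3) ℝ)⁻¹
        = !![1,0,0;-1,1,0;-1,0,1] := by
      apply Matrix.inv_eq_right_inv
      rw [Matrix.one_fin_three]; norm_num [Matrix.mul_fin_three]
    rw [hinv]
    refine ⟨?_, ?_, ?_, ?_⟩ <;>
      simp [Matrix.mulVec, dotProduct, Fin.sum_univ_three] <;> linarith
  · have hinv : (!![1,0,0;1,1,0;0,0,1] : Matrix (Fin 3) (Fin 3) ℝ)⁻¹
        = !![1,0,0;-1,1,0;0,0,1] := by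
      apply Matrix.inv_eq_right_inv
      rw [Matrix.one_fin_three]; norm_num [Matrix.mul_fin_three]
    rw [hinv]
    refine ⟨?_, ?_, ?_, ?_⟩ <;>
      simp [Matrix.mulVec, dotProduct, Fin.sum_univ_three] <;> linarith
end

section
/- If A, B, C, D, E, F are natural numbers satisfying E < A + C, F < B + D, and A·D − B·C = 1 (over the integers), then −A < A·F − B·E ≤ B if and only if −C ≤ C·F − D·E < D. -/
theorem stmt_5 (A B C D E F : ℕ)
    (hE : (E : ℤ) < A + C) (hF : (F : ℤ) < B + D)
    (hdet : (A : ℤ) * D - B * C = 1) :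
    (-(A : ℤ) < A * F - B * E ∧ (A : ℤ) * F - B * E ≤ B) ↔
    (-(C : ℤ) ≤ C * F - D * E ∧ (C : ℤ) * F - D * E < D) := by
  have hA0 : (0:ℤ) ≤ A := Int.natCast_nonneg A
  have hB0 : (0:ℤ) ≤ B := Int.natCast_nonneg B
  have hC0 : (0:ℤ) ≤ C := Int.natCast_nonneg C
  have hD0 : (0:ℤ) ≤ D := Int.natCast_nonneg D
  have hE0 : (0:ℤ) ≤ E := Int.natCast_nonneg E
  have hF0 : (0:ℤ) ≤ F := Int.natCast_nonneg F
  have hBC : (0:ℤ) ≤ B * C := mul_nonneg hB0 hC0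
  have hA1 : (1:ℤ) ≤ A := by nlinarith
  have hD1 : (1:ℤ) ≤ D := by nlinarith
  set x : ℤ := (A:ℤ) * F - B * E with hx
  set y : ℤ := (C:ℤ) * F - D * E with hy
  have hEid : (E:ℤ) = C * x - A * y := by rw [hx, hy]; linear_combination (-(E:ℤ)) * hdet
  have hFid : (F:ℤ) = D * x - B * y := by rw [hx, hy]; linear_combination (-(F:ℤ)) * hdet
  constructor
  · rintro ⟨h1, h2⟩
    constructor
    · -- -C ≤ y, else y ≤ -C-1, then E ≥ A+C
      by_contra h
      push_neg at h
      have hy' : y ≤ -(C:ℤ) - 1 := by linarith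
      nlinarith [mul_nonneg hC0 (by linarith : (0:ℤ) ≤ x + A - 1),
        mul_nonneg hA0 (by linarith : (0:ℤ) ≤ -(C:ℤ) - 1 - y)]
    · -- y < D, else Ay ≥ AD, Cx ≤ CB, E ≤ -1
      by_contra h
      push_neg at h
      nlinarith [mul_nonneg hA0 (by linarith : (0:ℤ) ≤ y - D),
        mul_nonneg hC0 (by linarith : (0:ℤ) ≤ (B:ℤ) - x)]
  · rintro ⟨h1, h2⟩
    constructor
    · -- -A < x, else x ≤ -A, then F ≤ -1
      by_contra h
      push_neg at h
      nlinarith [mul_nonneg hD0 (by linarith : (0:ℤ) ≤ -(A:ℤ) - x),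
        mul_nonneg hB0 (by linarith : (0:ℤ) ≤ y + C)]
    · -- x ≤ B, else F ≥ B+D
      by_contra h
      push_neg at h
      nlinarith [mul_nonneg hD0 (by linarith : (0:ℤ) ≤ x - B - 1),
        mul_nonneg hB0 (by linarith : (0:ℤ) ≤ (D:ℤ) - 1 - y)]
end

section
/- Let R = [[A,B,0],[C,D,0],[E,F,1]] with A,B,C,D,E,F natural numbers, A·D − B·C = 1, E < A + C, F < B + D, and −C ≤ C·F − D·E < D. Then the inverse of R (over ℤ) equals [[D,−B,0],[−C,A,0],[F·C−E·D, B·E−F·A, 1]], and R maps the cone C₁ = {(x,y,z) : 0 ≤ x, 0 ≤ y, 0 ≤ z ≤ x+y} into itself while R⁻¹ maps C₂ = {(x,y,z) : 0 ≤ x, y ≤ 0, y ≤ z ≤ x} into itself. -/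
open Matrix

set_option maxHeartbeats 1000000 in
theorem stmt_7 (A B C D E F : ℕ)
    (hdet : (A : ℤ) * D - B * C = 1)
    (hE : (E : ℤ) < A + C) (hF : (F : ℤ) < B + D)
    (h1 : -(C : ℤ) ≤ C * F - D * E) (h2 : (C : ℤ) * F - D * E < D)
    (R : Matrix (Fin 3) (Fin 3) ℤ)
    (hR : R = !![(A:ℤ), B, 0; C, D, 0; E, F, 1]) :
    R⁻¹ = !![(D:ℤ), -(B:ℤ), 0; -(C:ℤ), A, 0; (F:ℤ)*C - E*D, (B:ℤ)*E - F*A, 1] ∧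
    (∀ v : Fin 3 → ℝ, (0 ≤ v 0 ∧ 0 ≤ v 1 ∧ 0 ≤ v 2 ∧ v 2 ≤ v 0 + v 1) →
      (0 ≤ (R.map (Int.cast : ℤ → ℝ)).mulVec v 0 ∧ 0 ≤ (R.map (Int.cast : ℤ → ℝ)).mulVec v 1 ∧
       0 ≤ (R.map (Int.cast : ℤ → ℝ)).mulVec v 2 ∧
       (R.map (Int.cast : ℤ → ℝ)).mulVec v 2 ≤ (R.map (Int.cast : ℤ → ℝ)).mulVec v 0 + (R.map (Int.cast : ℤ → ℝ)).mulVec v 1)) ∧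
    (∀ v : Fin 3 → ℝ, (0 ≤ v 0 ∧ v 1 ≤ 0 ∧ v 1 ≤ v 2 ∧ v 2 ≤ v 0) →
      (0 ≤ ((R⁻¹).map (Int.cast : ℤ → ℝ)).mulVec v 0 ∧ ((R⁻¹).map (Int.cast : ℤ → ℝ)).mulVec v 1 ≤ 0 ∧
       ((R⁻¹).map (Int.cast : ℤ → ℝ)).mulVec v 1 ≤ ((R⁻¹).map (Int.cast : ℤ → ℝ)).mulVec v 2 ∧
       ((R⁻¹).map (Int.cast : ℤ → ℝ)).mulVec v 2 ≤ ((R⁻¹).map (Int.cast : ℤ → ℝ)).mulVec v 0)) := by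
  have hA0 : (0:ℤ) ≤ A := Int.natCast_nonneg A
  have hB0 : (0:ℤ) ≤ B := Int.natCast_nonneg B
  have hC0 : (0:ℤ) ≤ C := Int.natCast_nonneg C
  have hD0 : (0:ℤ) ≤ D := Int.natCast_nonneg D
  have hE0 : (0:ℤ) ≤ E := Int.natCast_nonneg E
  have hF0 : (0:ℤ) ≤ F := Int.natCast_nonneg F
  have hD1 : (1:ℤ) ≤ D := by
    rcases Nat.eq_zero_or_pos D with h | h
    · subst h; simp at hdet; nlinarith [mul_nonneg hB0 hC0]
    · exact_mod_cast h
  -- key integer facts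
  have k1 : (1:ℤ) ≤ A * F - B * E + A := by
    have hid : (D:ℤ) * (A*F - B*E + A) = (F + 1) + B*(C*F - D*E + C) := by
      linear_combination ((F:ℤ)+1) * hdet
    nlinarith [mul_nonneg hB0 (by linarith : (0:ℤ) ≤ C*F - D*E + C),
      mul_nonneg (by linarith : (0:ℤ) ≤ D - 1) (by nlinarith [mul_nonneg hB0 (by linarith : (0:ℤ) ≤ C*F - D*E + C)] : (0:ℤ) ≤ A*F - B*E + A)]
  have k2 : (0:ℤ) ≤ B * E + B - A * F := by
    have hid : (D:ℤ) * (B*E + B - A*F + 1) = (B + D - F) + B*(D - 1 - (C*F - D*E)) := by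
      linear_combination (-(F:ℤ)) * hdet
    nlinarith [mul_nonneg hB0 (by linarith : (0:ℤ) ≤ D - 1 - (C*F - D*E)),
      mul_nonneg (by linarith : (0:ℤ) ≤ D - 1) (by nlinarith [mul_nonneg hB0 (by linarith : (0:ℤ) ≤ D - 1 - (C*F - D*E))] : (0:ℤ) ≤ B*E + B - A*F + 1)]
  have hinv : R⁻¹ = !![(D:ℤ), -(B:ℤ), 0; -(C:ℤ), A, 0; (F:ℤ)*C - E*D, (B:ℤ)*E - F*A, 1] := by
    apply inv_eq_right_inv
    subst hR
    ext i j
    fin_cases i <;> fin_cases j <;>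
      simp [Matrix.mul_apply, Fin.sum_univ_succ, Matrix.one_apply] <;> linarith [hdet]
  refine ⟨hinv, ?_, ?_⟩
  · rintro v ⟨hv0, hv1, hv2, hv3⟩
    have hE' : ((E:ℝ)) + 1 ≤ (A:ℝ) + C := by exact_mod_cast hE
    have hF' : ((F:ℝ)) + 1 ≤ (B:ℝ) + D := by exact_mod_cast hF
    have hA0' : (0:ℝ) ≤ A := by positivity
    have hB0' : (0:ℝ) ≤ B := by positivity
    have hC0' : (0:ℝ) ≤ C := by positivity
    have hD0' : (0:ℝ) ≤ D := by positivity
    have hE0' : (0:ℝ) ≤ E := by positivity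
    have hF0' : (0:ℝ) ≤ F := by positivity
    have e0 : (R.map (Int.cast : ℤ → ℝ)).mulVec v 0 = A * v 0 + B * v 1 := by
      subst hR; simp [Matrix.mulVec, dotProduct, Fin.sum_univ_succ]
    have e1 : (R.map (Int.cast : ℤ → ℝ)).mulVec v 1 = C * v 0 + D * v 1 := by
      subst hR; simp [Matrix.mulVec, dotProduct, Fin.sum_univ_succ]
    have e2 : (R.map (Int.cast : ℤ → ℝ)).mulVec v 2 = E * v 0 + F * v 1 + v 2 := by
      subst hR; simp [Matrix.mulVec, dotProduct, Fin.sum_univ_succ]; ring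
    rw [e0, e1, e2]
    clear hinv hR
    refine ⟨by nlinarith [mul_nonneg hA0' hv0, mul_nonneg hB0' hv1],
      by nlinarith [mul_nonneg hC0' hv0, mul_nonneg hD0' hv1],
      by nlinarith [mul_nonneg hE0' hv0, mul_nonneg hF0' hv1], ?_⟩
    nlinarith [mul_nonneg (by linarith : (0:ℝ) ≤ (A:ℝ) + C - E - 1) hv0,
      mul_nonneg (by linarith : (0:ℝ) ≤ (B:ℝ) + D - F - 1) hv1]
  · rintro v ⟨hv0, hv1, hv2, hv3⟩
    have h1' : -(C:ℝ) ≤ (C:ℝ) * F - D * E := by exact_mod_cast h1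
    have h2' : (C:ℝ) * F - D * E + 1 ≤ (D:ℝ) := by exact_mod_cast h2
    have k1' : (1:ℝ) ≤ (A:ℝ) * F - B * E + A := by exact_mod_cast k1
    have k2' : (0:ℝ) ≤ (B:ℝ) * E + B - A * F := by exact_mod_cast k2
    have hB0' : (0:ℝ) ≤ B := by positivity
    have hC0' : (0:ℝ) ≤ C := by positivity
    have hA0' : (0:ℝ) ≤ A := by positivity
    have hD0' : (0:ℝ) ≤ D := by positivity
    have e0 : ((R⁻¹).map (Int.cast : ℤ → ℝ)).mulVec v 0 = D * v 0 - B * v 1 := by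
      rw [hinv]; simp [Matrix.mulVec, dotProduct, Fin.sum_univ_succ]; ring
    have e1 : ((R⁻¹).map (Int.cast : ℤ → ℝ)).mulVec v 1 = -(C:ℝ) * v 0 + A * v 1 := by
      rw [hinv]; simp [Matrix.mulVec, dotProduct, Fin.sum_univ_succ]
    have e2 : ((R⁻¹).map (Int.cast : ℤ → ℝ)).mulVec v 2
        = ((F:ℝ)*C - E*D) * v 0 + ((B:ℝ)*E - F*A) * v 1 + v 2 := by
      rw [hinv]; simp [Matrix.mulVec, dotProduct, Fin.sum_univ_succ]; ring
    rw [e0, e1, e2]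
    clear hinv hR
    refine ⟨?_, ?_, ?_, ?_⟩
    · nlinarith [mul_nonneg hD0' hv0, mul_nonpos_of_nonneg_of_nonpos hB0' hv1]
    · nlinarith [mul_nonneg hC0' hv0, mul_nonpos_of_nonneg_of_nonpos hA0' hv1]
    · nlinarith [mul_nonneg (by linarith : (0:ℝ) ≤ (F:ℝ)*C - E*D + C) hv0,
        mul_nonpos_of_nonneg_of_nonpos (by linarith : (0:ℝ) ≤ (A:ℝ)*F - B*E + A - 1) hv1,
        hv2]
    · nlinarith [mul_nonneg (by nlinarith : (0:ℝ) ≤ (D:ℝ) - ((F:ℝ)*C - E*D) - 1) hv0,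
        mul_nonpos_of_nonneg_of_nonpos (by linarith : (0:ℝ) ≤ (B:ℝ)*E + B - A*F) hv1,
        hv3]
end

section
/- Let R be a 3×3 integer matrix with determinant 1 such that R maps the cone C₃ = {(0,0,z) : z ≥ 0} into itself and R maps the cone C₁ = {(x,y,z) : 0 ≤ x, 0 ≤ y, 0 ≤ z ≤ x+y} into itself. Then R has the form [[A,B,0],[C,D,0],[E,F,1]] with all entries A,B,C,D,E,F nonnegative, A·D − B·C = 1, E < A + C, and F < B + D. -/
open Matrix

theorem stmt_8 (R : Matrix (Fin 3) (Fin 3) ℤ)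
    (hdet : R.det = 1)
    (hC3 : ∀ v : Fin 3 → ℝ, (v 0 = 0 ∧ v 1 = 0 ∧ 0 ≤ v 2) →
      ((R.map (Int.cast : ℤ → ℝ)).mulVec v 0 = 0 ∧ (R.map (Int.cast : ℤ → ℝ)).mulVec v 1 = 0 ∧
        0 ≤ (R.map (Int.cast : ℤ → ℝ)).mulVec v 2))
    (hC1 : ∀ v : Fin 3 → ℝ, (0 ≤ v 0 ∧ 0 ≤ v 1 ∧ 0 ≤ v 2 ∧ v 2 ≤ v 0 + v 1) →
      (0 ≤ (R.map (Int.cast : ℤ → ℝ)).mulVec v 0 ∧ 0 ≤ (R.map (Int.cast : ℤ → ℝ)).mulVec v 1 ∧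
       0 ≤ (R.map (Int.cast : ℤ → ℝ)).mulVec v 2 ∧
       (R.map (Int.cast : ℤ → ℝ)).mulVec v 2 ≤ (R.map (Int.cast : ℤ → ℝ)).mulVec v 0 + (R.map (Int.cast : ℤ → ℝ)).mulVec v 1)) :
    R 0 2 = 0 ∧ R 1 2 = 0 ∧ R 2 2 = 1 ∧
    0 ≤ R 0 0 ∧ 0 ≤ R 0 1 ∧ 0 ≤ R 1 0 ∧ 0 ≤ R 1 1 ∧ 0 ≤ R 2 0 ∧ 0 ≤ R 2 1 ∧
    R 0 0 * R 1 1 - R 0 1 * R 1 0 = 1 ∧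
    R 2 0 < R 0 0 + R 1 0 ∧ R 2 1 < R 0 1 + R 1 1 := by

  have key : ∀ a b c : ℝ, (0 ≤ a ∧ 0 ≤ b ∧ 0 ≤ c ∧ c ≤ a + b) →
      (0 ≤ a * R 0 0 + b * R 0 1 + c * R 0 2 ∧
       0 ≤ a * R 1 0 + b * R 1 1 + c * R 1 2 ∧
       0 ≤ a * R 2 0 + b * R 2 1 + c * R 2 2 ∧
       a * R 2 0 + b * R 2 1 + c * R 2 2 ≤
        (a * R 0 0 + b * R 0 1 + c * R 0 2) + (a * R 1 0 + b * R 1 1 + c * R 1 2)) := by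
    intro a b c h
    have := hC1 ![a, b, c] (by simpa using h)
    simpa [Matrix.mulVec, dotProduct, Fin.sum_univ_three, mul_comm, Matrix.vecHead, Matrix.vecTail] using this
  have key3 := hC3 ![(0:ℝ), 0, 1] (by refine ⟨rfl, rfl, ?_⟩; show (0:ℝ) ≤ 1; norm_num)
  simp [Matrix.mulVec, dotProduct, Fin.sum_univ_three, Matrix.vecHead, Matrix.vecTail] at key3
  obtain ⟨h02, h12, h22⟩ := key3
  have h02' : R 0 2 = 0 := by exact_mod_cast h02
  have h12' : R 1 2 = 0 := by exact_mod_cast h12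
  have h22' : (0:ℤ) ≤ R 2 2 := by exact_mod_cast h22
  have k1 := key 1 0 0 (by norm_num)
  have k2 := key 0 1 0 (by norm_num)
  have k3 := key 1 0 1 (by norm_num)
  have k4 := key 0 1 1 (by norm_num)
  simp [h02, h12] at k1 k2 k3 k4
  obtain ⟨a00, a10, a20, e1⟩ := k1
  obtain ⟨a01, a11, a21, e2⟩ := k2
  have a00' : (0:ℤ) ≤ R 0 0 := by exact_mod_cast a00
  have a10' : (0:ℤ) ≤ R 1 0 := by exact_mod_cast a10
  have a20' : (0:ℤ) ≤ R 2 0 := by exact_mod_cast a20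
  have a01' : (0:ℤ) ≤ R 0 1 := by exact_mod_cast a01
  have a11' : (0:ℤ) ≤ R 1 1 := by exact_mod_cast a11
  have a21' : (0:ℤ) ≤ R 2 1 := by exact_mod_cast a21
  have e3 : (R 2 0 : ℝ) + R 2 2 ≤ R 0 0 + R 1 0 := by linarith [k3.2.2.2]
  have e4 : (R 2 1 : ℝ) + R 2 2 ≤ R 0 1 + R 1 1 := by linarith [k4.2.2.2]
  have e3' : R 2 0 + R 2 2 ≤ R 0 0 + R 1 0 := by exact_mod_cast e3
  have e4' : R 2 1 + R 2 2 ≤ R 0 1 + R 1 1 := by exact_mod_cast e4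
  rw [Matrix.det_fin_three, h02', h12'] at hdet
  have hdvd : R 2 2 ∣ 1 := ⟨R 0 0 * R 1 1 - R 0 1 * R 1 0, by ring_nf; ring_nf at hdet; linarith⟩
  have h22eq : R 2 2 = 1 := Int.eq_one_of_dvd_one h22' hdvd
  rw [h22eq] at hdet e3' e4'
  refine ⟨h02', h12', h22eq, a00', a01', a10', a11', a20', a21', by linarith, by linarith, by linarith⟩
end

section
/- Let R = [[A,B,0],[C,D,0],[E,F,1]] be an integer matrix with determinant 1 whose inverse maps C₂ = {(x,y,z) : 0 ≤ x, y ≤ 0, y ≤ z ≤ x} into itself, and assume all of A,B,C,D,E,F are nonnegative. Then −C ≤ C·F − D·E < D. -/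
open Matrix

theorem stmt_9 (A B C D E F : ℕ)
    (R : Matrix (Fin 3) (Fin 3) ℤ)
    (hR : R = !![(A:ℤ), B, 0; C, D, 0; E, F, 1])
    (hdet : (A : ℤ) * D - B * C = 1)
    (hC2 : ∀ v : Fin 3 → ℝ, (0 ≤ v 0 ∧ v 1 ≤ 0 ∧ v 1 ≤ v 2 ∧ v 2 ≤ v 0) →
      (0 ≤ ((R.map (Int.cast : ℤ → ℝ))⁻¹).mulVec v 0 ∧
       ((R.map (Int.cast : ℤ → ℝ))⁻¹).mulVec v 1 ≤ 0 ∧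
       ((R.map (Int.cast : ℤ → ℝ))⁻¹).mulVec v 1 ≤ ((R.map (Int.cast : ℤ → ℝ))⁻¹).mulVec v 2 ∧
       ((R.map (Int.cast : ℤ → ℝ))⁻¹).mulVec v 2 ≤ ((R.map (Int.cast : ℤ → ℝ))⁻¹).mulVec v 0)) :
    -(C : ℤ) ≤ C * F - D * E ∧ (C : ℤ) * F - D * E < D := by
  have hdet' : (A : ℝ) * D - B * C = 1 := by exact_mod_cast hdet
  have hinv : (R.map (Int.cast : ℤ → ℝ))⁻¹ =
      !![(D:ℝ), -B, 0; -C, A, 0; (C:ℝ)*F - D*E, (B:ℝ)*E - A*F, 1] := by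
    apply Matrix.inv_eq_right_inv
    subst hR
    ext i j
    fin_cases i <;> fin_cases j <;>
      simp [Matrix.mul_apply, Fin.sum_univ_three, Matrix.one_apply] <;> ring_nf <;>
      nlinarith [hdet']
  have h1 := hC2 ![1, 0, 0] (by norm_num [Matrix.cons_val_two])
  have h2 := hC2 ![1, 0, 1] (by norm_num [Matrix.cons_val_two])
  rw [hinv] at h1 h2
  simp [Matrix.mulVec, dotProduct, Fin.sum_univ_three] at h1 h2
  obtain ⟨ha, -⟩ := h1
  obtain ⟨-, hb⟩ := h2
  constructor
  · have : -(C : ℝ) ≤ (C:ℝ) * F - D * E := by linarith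
    exact_mod_cast this
  · have : (C:ℝ) * F - D * E + 1 ≤ D := by linarith
    have h : (C:ℤ) * F - D * E + 1 ≤ D := by exact_mod_cast this
    linarith
end

section
/- Every 3×3 integer matrix R with determinant 1 of the form [[A,B,0],[C,D,0],[E,F,1]] with nonnegative entries satisfying E < A + C, F < B + D, and −C ≤ C·F − D·E < D belongs to the multiplicative monoid generated by the four matrices R_G, R_G̃, R_D, R_D̃. -/
open Matrix

set_option maxHeartbeats 1000000 in
private lemma gen_mem_aux : ∀ n : ℕ, ∀ A B C D E F : ℤ,
    0 ≤ A → 0 ≤ B → 0 ≤ C → 0 ≤ D → 0 ≤ E → 0 ≤ F →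
    A * D - B * C = 1 → E < A + C → F < B + D →
    -C ≤ C * F - D * E → C * F - D * E < D →
    A + B + C + D ≤ (n : ℤ) →
    (!![A, B, 0; C, D, 0; E, F, 1] : Matrix (Fin 3) (Fin 3) ℤ) ∈
      Submonoid.closure ({!![1,1,0;0,1,0;0,0,1], !![1,1,0;0,1,0;0,1,1],
        !![1,0,0;1,1,0;1,0,1], !![1,0,0;1,1,0;0,0,1]} : Set (Matrix (Fin 3) (Fin 3) ℤ)) := by
  intro n
  induction n with
  | zero =>
    intro A B C D E F hA hB hC hD hE0 hF0 hdet hE hF h1 h2 hn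
    exfalso
    have hA0 : A = 0 := by omega
    rw [hA0] at hdet
    nlinarith [mul_nonneg hB hC]
  | succ n ih =>
    intro A B C D E F hA hB hC hD hE0 hF0 hdet hE hF h1 h2 hn
    have hD1 : 1 ≤ D := by
      by_contra h; push_neg at h
      nlinarith [mul_nonneg hB hC]
    have hA1 : 1 ≤ A := by
      by_contra h; push_neg at h
      nlinarith [mul_nonneg hB hC]
    by_cases hc1 : C ≤ A ∧ D ≤ B
    · obtain ⟨hCA, hDB⟩ := hc1
      have hACs : C + 1 ≤ A := by
        by_contra h; push_neg at h
        nlinarith [mul_le_mul_of_nonneg_right (show A ≤ C by linarith) hD,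
          mul_nonneg hC (sub_nonneg.mpr hDB)]
      by_cases hs : C ≤ E ∧ D ≤ F
      · obtain ⟨hCE, hDF⟩ := hs
        have key : (!![A, B, 0; C, D, 0; E, F, 1] : Matrix (Fin 3) (Fin 3) ℤ)
            = !![1,1,0;0,1,0;0,1,1] * !![A-C, B-D, 0; C, D, 0; E-C, F-D, 1] := by
          rw [Matrix.mul_fin_three]; congr 1 <;> ring
        rw [key]
        refine Submonoid.mul_mem _ (Submonoid.subset_closure (by simp)) ?_
        refine ih (A-C) (B-D) C D (E-C) (F-D) (by linarith) (by linarith) hC hD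
          (by linarith) (by linarith) (by linear_combination hdet) (by linarith)
          (by linarith) ?_ ?_ (by push_cast at hn ⊢; linarith)
        · have h : C * (F - D) - D * (E - C) = C * F - D * E := by ring
          linarith [h1, h.le]
        · have h : C * (F - D) - D * (E - C) = C * F - D * E := by ring
          linarith [h2, h.le]
      · have hEA : E < A := by
          by_contra h; push_neg at h
          rcases eq_or_lt_of_le hC with hC0 | hC1
          · rw [← hC0] at h1
            nlinarith [mul_le_mul hD1 (show (1:ℤ) ≤ E by linarith) (by linarith) (by linarith)]
          · have hFB : B ≤ F := by
              by_contra h'; push_neg at h'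
              nlinarith [h1, hdet, mul_le_mul_of_nonneg_left h hD,
                mul_le_mul_of_nonneg_left (show F - B + 1 ≤ 0 by linarith) hC]
            exact hs ⟨by linarith, by linarith⟩
        have hFB : F < B := by
          by_contra h; push_neg at h
          have hEA' : A - 1 ≤ E := by
            by_contra h'; push_neg at h'
            nlinarith [h2, hdet, mul_le_mul_of_nonneg_left h hC,
              mul_le_mul_of_nonneg_left (show E - A + 1 ≤ -1 by linarith) hD]
          exact hs ⟨by linarith, by linarith⟩
        have key : (!![A, B, 0; C, D, 0; E, F, 1] : Matrix (Fin 3) (Fin 3) ℤ)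
            = !![1,1,0;0,1,0;0,0,1] * !![A-C, B-D, 0; C, D, 0; E, F, 1] := by
          rw [Matrix.mul_fin_three]; congr 1 <;> ring
        rw [key]
        refine Submonoid.mul_mem _ (Submonoid.subset_closure (by simp)) ?_
        exact ih (A-C) (B-D) C D E F (by linarith) (by linarith) hC hD hE0 hF0
          (by linear_combination hdet) (by linarith) (by linarith) h1 h2
          (by push_cast at hn ⊢; linarith)
    · by_cases hc2 : A ≤ C ∧ B ≤ D
      · obtain ⟨hAC, hBD⟩ := hc2
        have hC1 : 1 ≤ C := by linarith
        have hBD1 : B + 1 ≤ D := by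
          by_contra h; push_neg at h
          nlinarith [mul_le_mul_of_nonneg_right (show D ≤ B by linarith) hA,
            mul_nonneg hB (sub_nonneg.mpr hAC)]
        have key1 : (A*F - B*E) * D = (C*F - D*E) * B + F := by linear_combination F * hdet
        have key2 : (A*F - B*E) * C = (C*F - D*E) * A + E := by linear_combination E * hdet
        have hfB : A*F - B*E ≤ B := by
          by_contra h; push_neg at h
          nlinarith [key1, mul_le_mul_of_nonneg_right (show C*F - D*E ≤ D - 1 by linarith) hB,
            mul_le_mul_of_nonneg_right (show B + 1 ≤ A*F - B*E by linarith) hD]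
        have hfA : 1 - A ≤ A*F - B*E := by
          have hstep : 1 ≤ A * ((C*F - D*E) + C) + E := by
            rcases lt_or_eq_of_le h1 with hgt | heq
            · nlinarith [mul_le_mul_of_nonneg_left (show (1:ℤ) ≤ C*F - D*E + C by linarith) hA]
            · have hE1 : 1 ≤ E := by
                by_contra h'; push_neg at h'
                have hE00 : E = 0 := by linarith
                rw [hE00] at heq
                nlinarith [mul_nonneg hC hF0]
              have hz : A * (C*F - D*E + C) = 0 := by rw [← heq]; ring
              linarith
          have hCfA : C * ((A*F - B*E) + A) = A * ((C*F - D*E) + C) + E := by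
            linear_combination key2
          by_contra h'; push_neg at h'
          linarith [hstep, hCfA,
            mul_le_mul_of_nonneg_left (show (A*F - B*E) + A ≤ 0 by linarith) hC]
        have detp : A*(D-B) - B*(C-A) = 1 := by linear_combination hdet
        by_cases hs : A ≤ E ∧ B ≤ F
        · obtain ⟨hAE, hBF⟩ := hs
          have keyp1 : (A*F - B*E)*(D-B) = ((C-A)*(F-B) - (D-B)*(E-A))*B + (F-B) := by
            linear_combination (F - B) * hdet
          have keyp2 : (A*F - B*E)*(C-A) = ((C-A)*(F-B) - (D-B)*(E-A))*A + (E-A) := by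
            linear_combination (E - A) * hdet
          have hup : (C-A)*(F-B) - (D-B)*(E-A) < D - B := by
            by_contra h'; push_neg at h'
            have hfgeB : B ≤ A*F - B*E := by
              by_contra h''; push_neg at h''
              linarith [keyp1, hBF, mul_le_mul_of_nonneg_right h' hB,
                mul_le_mul_of_nonneg_left (show (A*F - B*E) - B ≤ -1 by linarith)
                  (show (0:ℤ) ≤ D - B by linarith)]
            have hfB' : A*F - B*E = B := le_antisymm hfB hfgeB
            rw [hfB'] at keyp2
            linarith [keyp2, detp, hAE,
              mul_le_mul_of_nonneg_left
                (show (D-B) - ((C-A)*(F-B) - (D-B)*(E-A)) ≤ 0 by linarith) hA]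
          have hlo : -(C-A) ≤ (C-A)*(F-B) - (D-B)*(E-A) := by
            by_contra h'; push_neg at h'
            linarith [keyp2,
              mul_le_mul_of_nonneg_right hfA (show (0:ℤ) ≤ C - A by linarith),
              mul_le_mul_of_nonneg_left
                (show (C-A)*(F-B) - (D-B)*(E-A) ≤ A - C - 1 by linarith) hA, hE]
          have key : (!![A, B, 0; C, D, 0; E, F, 1] : Matrix (Fin 3) (Fin 3) ℤ)
              = !![1,0,0;1,1,0;1,0,1] * !![A, B, 0; C-A, D-B, 0; E-A, F-B, 1] := by
            rw [Matrix.mul_fin_three]; congr 1 <;> ring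
          rw [key]
          refine Submonoid.mul_mem _ (Submonoid.subset_closure (by simp)) ?_
          exact ih A B (C-A) (D-B) (E-A) (F-B) hA hB (by linarith) (by linarith)
            (by linarith) (by linarith) detp (by linarith) (by linarith) hlo hup
            (by push_cast at hn ⊢; linarith)
        · push_neg at hs
          have hFD : F < D := by
            by_contra h'; push_neg at h'
            have hEC' : C ≤ E := by
              by_contra h''; push_neg at h''
              nlinarith [h2, mul_le_mul_of_nonneg_left h' hC,
                mul_le_mul_of_nonneg_left (show E - C + 1 ≤ 0 by linarith) hD]
            have := hs (by linarith)
            linarith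
          have hEC : E < C := by
            by_contra h'; push_neg at h'
            have hFD' : D - 1 ≤ F := by
              by_contra h''; push_neg at h''
              nlinarith [h1, mul_le_mul_of_nonneg_left h' hD,
                mul_le_mul_of_nonneg_left (show F ≤ D - 2 by linarith) hC]
            have := hs (by linarith)
            linarith
          have keyp1 : (A*F - B*E)*(D-B) = ((C-A)*F - (D-B)*E)*B + F := by
            linear_combination F * hdet
          have keyp2 : (A*F - B*E)*(C-A) = ((C-A)*F - (D-B)*E)*A + E := by
            linear_combination E * hdet
          have hup : (C-A)*F - (D-B)*E < D - B := by
            by_contra h'; push_neg at h'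
            have hfgeB : B ≤ A*F - B*E := by
              by_contra h''; push_neg at h''
              linarith [keyp1, hF0, mul_le_mul_of_nonneg_right h' hB,
                mul_le_mul_of_nonneg_left (show (A*F - B*E) - B ≤ -1 by linarith)
                  (show (0:ℤ) ≤ D - B by linarith)]
            have hfB' : A*F - B*E = B := le_antisymm hfB hfgeB
            rw [hfB'] at keyp2
            linarith [keyp2, detp, hE0,
              mul_le_mul_of_nonneg_left
                (show (D-B) - ((C-A)*F - (D-B)*E) ≤ 0 by linarith) hA]
          have hlo : -(C-A) ≤ (C-A)*F - (D-B)*E := by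
            by_contra h'; push_neg at h'
            linarith [keyp2,
              mul_le_mul_of_nonneg_right hfA (show (0:ℤ) ≤ C - A by linarith),
              mul_le_mul_of_nonneg_left
                (show (C-A)*F - (D-B)*E ≤ A - C - 1 by linarith) hA, hEC]
          have key : (!![A, B, 0; C, D, 0; E, F, 1] : Matrix (Fin 3) (Fin 3) ℤ)
              = !![1,0,0;1,1,0;0,0,1] * !![A, B, 0; C-A, D-B, 0; E, F, 1] := by
            rw [Matrix.mul_fin_three]; congr 1 <;> ring
          rw [key]
          refine Submonoid.mul_mem _ (Submonoid.subset_closure (by simp)) ?_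
          exact ih A B (C-A) (D-B) E F hA hB (by linarith) (by linarith) hE0 hF0
            detp (by linarith) (by linarith) hlo hup
            (by push_cast at hn ⊢; linarith)
      · push_neg at hc1 hc2
        rcases le_total C A with h | h
        · have hBD : B < D := hc1 h
          have hCA : C < A := by
            by_contra h''; push_neg at h''
            have := hc2 h''; linarith
          have hBC0 : B + C ≤ 0 := by
            nlinarith [mul_le_mul (show C+1 ≤ A by linarith) (show B+1 ≤ D by linarith)
              (by linarith) (by linarith)]
          have hB0 : B = 0 := by linarith
          have hC0 : C = 0 := by linarith
          have hA1' : A = 1 := by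
            by_contra h''
            have h2A : 2 ≤ A := by omega
            rw [hB0, hC0] at hdet
            nlinarith [mul_le_mul h2A hD1 (by linarith) (by linarith)]
          have hD1' : D = 1 := by
            rw [hA1', hB0, hC0] at hdet; linarith
          have hEz : E = 0 := by rw [hA1', hC0] at hE; linarith
          have hFz : F = 0 := by rw [hB0, hD1'] at hF; linarith
          rw [hA1', hB0, hC0, hD1', hEz, hFz, ← Matrix.one_fin_three]
          exact one_mem _
        · have hDB : D < B := hc2 h
          have hAC : A < C := by
            by_contra h''; push_neg at h''
            have := hc1 h''; linarith
          exfalso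
          nlinarith [hdet, mul_le_mul (show D+1 ≤ B by linarith) (show A+1 ≤ C by linarith)
            (by linarith) (by linarith)]

theorem stmt_11 (A B C D E F : ℕ)
    (hdet : (A : ℤ) * D - B * C = 1)
    (hE : (E : ℤ) < A + C) (hF : (F : ℤ) < B + D)
    (h1 : -(C : ℤ) ≤ C * F - D * E) (h2 : (C : ℤ) * F - D * E < D) :
    (!![(A:ℤ), B, 0; C, D, 0; E, F, 1] : Matrix (Fin 3) (Fin 3) ℤ) ∈
      Submonoid.closure ({!![1,1,0;0,1,0;0,0,1], !![1,1,0;0,1,0;0,1,1],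
        !![1,0,0;1,1,0;1,0,1], !![1,0,0;1,1,0;0,0,1]} : Set (Matrix (Fin 3) (Fin 3) ℤ)) := by
  exact gen_mem_aux (A + B + C + D) A B C D E F
    (Int.natCast_nonneg A) (Int.natCast_nonneg B) (Int.natCast_nonneg C)
    (Int.natCast_nonneg D) (Int.natCast_nonneg E) (Int.natCast_nonneg F)
    hdet hE hF h1 h2 (by push_cast; linarith)
end

section
/- For every matrix M = [[A,B],[C,D]] with nonnegative integer entries and determinant 1, and every S ∈ {0,1,…,A+B+C+D−2}, there exists a unique pair (E,F) of natural numbers with E + F = S such that the matrix [[A,B,0],[C,D,0],[E,F,1]] satisfies E < A+C, F < B+D, and −C ≤ C·F − D·E < D. -/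
theorem stmt_15 (A B C D : ℕ)
    (hdet : (A : ℤ) * D - B * C = 1)
    (S : ℕ) (hS : S + 2 ≤ A + B + C + D) :
    ∃! p : ℕ × ℕ, p.1 + p.2 = S ∧
      (p.1 : ℤ) < A + C ∧ (p.2 : ℤ) < B + D ∧
      -(C : ℤ) ≤ C * p.2 - D * p.1 ∧ (C : ℤ) * p.2 - D * p.1 < D := by
  have hD : 1 ≤ D := by
    rcases Nat.eq_zero_or_pos D with h | h
    · exfalso; subst h
      have : (0:ℤ) ≤ (B:ℤ) * C := mul_nonneg (by positivity) (by positivity)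
      push_cast at hdet; nlinarith
    · exact h
  set n := C + D with hn
  have hn1 : 1 ≤ n := by omega
  set E := C * (S + 1) / n with hE
  have hdm := Nat.div_add_mod (C * (S + 1)) n
  have hmod := Nat.mod_lt (C * (S + 1)) (show 0 < n by omega)
  have h1 : n * E ≤ C * (S + 1) := Nat.le.intro hdm
  have h2 : C * (S + 1) < n * E + n := by
    rw [← hdm]; exact Nat.add_lt_add_left hmod _
  have hCn : C < n := by omega
  have hES : E ≤ S := by
    have h3 : C * (S + 1) < n * (S + 1) := by
      exact Nat.mul_lt_mul_of_lt_of_le hCn (le_refl _) (by omega)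
    have h4 : n * E < n * (S + 1) := lt_of_le_of_lt h1 h3
    have := Nat.lt_of_mul_lt_mul_left h4
    omega
  set F := S - E with hFdef
  have hF : E + F = S := by omega
  -- integer versions
  have hFz : (E : ℤ) + F = S := by exact_mod_cast hF
  have hz1 : (n : ℤ) * E ≤ (C : ℤ) * S + C := by exact_mod_cast (by push_cast; push_cast at h1 ⊢; linarith : (n:ℤ) * E ≤ (C:ℤ) * S + C)
  have hz2 : (C : ℤ) * S - D < (n : ℤ) * E := by
    have : (C : ℤ) * (S + 1) < n * E + n := by exact_mod_cast h2
    have hnz : (n : ℤ) = C + D := by push_cast [hn]; ring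
    linarith [this, hnz.le]
  have hnz : (n : ℤ) = C + D := by push_cast [hn]; ring
  have hSz : (S : ℤ) ≤ (A : ℤ) + B + C + D - 2 := by exact_mod_cast (by push_cast; omega : (S:ℤ) ≤ (A:ℤ) + B + C + D - 2)
  have hDz : (1 : ℤ) ≤ D := by exact_mod_cast hD
  have hCz : (0 : ℤ) ≤ C := by positivity
  have hconds : ∀ q : ℕ × ℕ, q.1 + q.2 = S →
      ((C : ℤ) * q.2 - D * q.1 = (C : ℤ) * S - n * q.1) := by
    intro q hq
    have : (q.1 : ℤ) + q.2 = S := by exact_mod_cast hq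
    rw [hnz]; linear_combination (C : ℤ) * this
  refine ⟨(E, F), ⟨hF, ?_, ?_, ?_, ?_⟩, ?_⟩
  · -- E < A + C
    show (E : ℤ) < A + C
    by_contra hcon
    push_neg at hcon
    have hnE : (n : ℤ) * ((A:ℤ) + C) ≤ n * E :=
      mul_le_mul_of_nonneg_left hcon (by positivity)
    nlinarith [mul_le_mul_of_nonneg_left hSz hCz]
  · -- F < B + D
    show (F : ℤ) < B + D
    have hFz2 : (F : ℤ) = S - E := by linarith [hFz]
    by_contra hcon
    push_neg at hcon
    have hnF : (n : ℤ) * ((B:ℤ) + D) ≤ n * F :=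
      mul_le_mul_of_nonneg_left hcon (by positivity)
    have hDS : (D : ℤ) * S ≤ D * ((A:ℤ) + B + C + D - 2) :=
      mul_le_mul_of_nonneg_left hSz (by positivity)
    nlinarith [hz2, hnz]
  · rw [hconds (E, F) hF]; simp only; linarith
  · rw [hconds (E, F) hF]; simp only; linarith [hnz]
  · rintro q ⟨hq1, hq2, hq3, hq4, hq5⟩
    rw [hconds q hq1] at hq4 hq5
    -- so C*S - D < n*q.1 ≤ C*S + C
    have ha : (n : ℤ) * q.1 ≤ (C:ℤ) * S + C := by linarith
    have hb : (C:ℤ) * S - D < (n : ℤ) * q.1 := by linarith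
    have hq1E : q.1 = E := by
      by_contra hne
      rcases Nat.lt_or_ge q.1 E with h | h
      · have : q.1 + 1 ≤ E := by omega
        have hc : (q.1 : ℤ) + 1 ≤ E := by exact_mod_cast this
        have : (n : ℤ) * (q.1 + 1) ≤ n * E :=
          mul_le_mul_of_nonneg_left hc (by positivity)
        have hx : (n : ℤ) * (q.1 + 1) = n * q.1 + n := by ring
        linarith [hz1, hb, hnz.le, hnz.ge]
      · have : E + 1 ≤ q.1 := by omega
        have hc : (E : ℤ) + 1 ≤ q.1 := by exact_mod_cast this
        have : (n : ℤ) * (E + 1) ≤ n * q.1 :=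
          mul_le_mul_of_nonneg_left hc (by positivity)
        have hx : (n : ℤ) * (E + 1) = n * E + n := by ring
        linarith [hz2, ha, hnz.le, hnz.ge]
    have hq2F : q.2 = F := by omega
    exact Prod.ext hq1E hq2F
end
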